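/- Let R be a Noetherian local ring, I an ideal, G = gr_I(R), and J = (a) a reduction of I with I^{r+1} = a I^r and a regular on R. Let x ∈ R be regular on R and on R/I^j for all 1 ≤ j ≤ r-1. Suppose also (0 : a) ∩ I^n = 0 for n ≥ r (automatic since a is regular). Then x* + a* is a nonzerodivisor on G, where x* is the degree-0 initial form of x and a* ∈ [G]_1 is the initial form of a. -/

import Mathlib

noncomputable section

open Polynomial IsLocalRing
open scoped Classical

set_option maxHeartbeats 1000000
set_option synthInstance.maxHeartbeats 400000

variable {R : Type*} [CommRing R]

/-- The depth (grade) of the `R`-module `M` with respect to the ideal `J`: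
the supremum of lengths of `M`-regular sequences contained in `J`. -/
def depthIn (J : Ideal R) (M : Type*) [AddCommGroup M] [Module R M] : ℕ∞ :=
  sSup {n : ℕ∞ | ∃ rs : List R, (rs.length : ℕ∞) = n ∧ (∀ r ∈ rs, r ∈ J) ∧
    RingTheory.Sequence.IsRegular M rs}

/-- A Noetherian local ring is Cohen–Macaulay if its depth equals its Krull dimension. -/
def IsCMLocalRing (R : Type*) [CommRing R] [IsLocalRing R] : Prop :=
  IsNoetherianRing R ∧
    ((depthIn (maximalIdeal R) R : ℕ∞) : WithBot ℕ∞) = ringKrullDim R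

/-- The ideal `I·R[It]` of the Rees algebra, whose quotient is the associated graded ring. -/
def constIdeal (I : Ideal R) : Ideal (reesAlgebra I) :=
  Ideal.span ((algebraMap R (reesAlgebra I)) '' I)

/-- The associated graded ring `gr_I(R) = R[It]/I·R[It] ≅ ⊕ Iⁿ/Iⁿ⁺¹`. -/
abbrev assocGraded (I : Ideal R) := reesAlgebra I ⧸ constIdeal I

/-- The degree-`n` graded component of the Rees algebra. -/
def reesPiece (I : Ideal R) (n : ℕ) : Submodule R (reesAlgebra I) where
  carrier := {x | ∀ k, k ≠ n → (x : R[X]).coeff k = 0}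
  add_mem' := by
    intro a b ha hb k hk
    simp [ha k hk, hb k hk]
  zero_mem' := by intro k hk; simp
  smul_mem' := by
    intro c x hx k hk
    simp [hx k hk]

/-- The degree-`n` graded component `[gr_I(R)]ₙ ≅ Iⁿ/Iⁿ⁺¹` of the associated graded ring,
as an `R`-submodule. -/
def gradedPiece (I : Ideal R) (n : ℕ) : Submodule R (assocGraded I) :=
  (reesPiece I n).map (Ideal.Quotient.mkₐ R (constIdeal I)).toLinearMap

/-- The irrelevant ideal `G₊` of the associated graded ring, generated by all homogeneous
elements of positive degree. -/
def irrelevantIdeal (I : Ideal R) : Ideal (assocGraded I) :=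
  Ideal.span {x | ∃ n, 0 < n ∧ x ∈ gradedPiece I n}

/-- The maximal homogeneous ideal `𝔪G + G₊` of the associated graded ring of an ideal in a
local ring; depth of graded modules is taken with respect to this ideal. -/
def maxHomIdeal (I : Ideal R) [IsLocalRing R] : Ideal (assocGraded I) :=
  irrelevantIdeal I ⊔ Ideal.span ((algebraMap R (assocGraded I)) '' (maximalIdeal R))

/-- The fiber cone (special fiber ring) `G ⊗ R/𝔪 = gr_I(R)/𝔪·gr_I(R)`. -/
abbrev fiberCone (I : Ideal R) [IsLocalRing R] :=
  assocGraded I ⧸ Ideal.span ((algebraMap R (assocGraded I)) '' (maximalIdeal R))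

/-- The analytic spread `ℓ(I) = dim gr_I(R) ⊗ R/𝔪`. -/
def analyticSpread (I : Ideal R) [IsLocalRing R] : WithBot ℕ∞ :=
  @ringKrullDim (fiberCone I) (@CommRing.toCommSemiring _ (Ideal.Quotient.commRing
    (R := assocGraded I) (Ideal.span ((algebraMap R (assocGraded I)) '' (maximalIdeal R)))))

/-- The height of an ideal: the infimum of the heights (dimensions of localizations) of the
primes containing it. -/
def idealHeight (I : Ideal R) : WithBot ℕ∞ :=
  sInf {d | ∃ (P : Ideal R) (h : P.IsPrime), I ≤ P ∧
    d = ringKrullDim (Localization (@Ideal.primeCompl R _ P h))}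

/-- `J` is a reduction of `I`: `J ⊆ I` and `I^{n+1} = J·Iⁿ` for some `n`. -/
def IsReduction (J I : Ideal R) : Prop := J ≤ I ∧ ∃ n : ℕ, I ^ (n + 1) = J * I ^ n

/-- `J` is a minimal reduction of `I`: a reduction minimal with respect to inclusion. -/
def IsMinimalReduction (J I : Ideal R) : Prop :=
  IsReduction J I ∧ ∀ J' : Ideal R, IsReduction J' I → J' ≤ J → J' = J

/-- The reduction number `r_J(I)`: the least `n` with `I^{n+1} = J·Iⁿ`. -/
def redNumWrt (J I : Ideal R) : ℕ := sInf {n : ℕ | I ^ (n + 1) = J * I ^ n}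

/-- The reduction number `r(I)`: the minimum of `r_J(I)` over minimal reductions `J`. -/
def reductionNumber (I : Ideal R) : ℕ :=
  sInf {n : ℕ | ∃ J : Ideal R, IsMinimalReduction J I ∧ redNumWrt J I = n}

/-- The saturation `K : G₊^∞`, i.e. elements killed into `K` by a power of the irrelevant
ideal. -/
def satIrrelevant (I : Ideal R) (K : Ideal (assocGraded I)) : Set (assocGraded I) :=
  {x | ∃ k : ℕ, ∀ y ∈ (irrelevantIdeal I) ^ k, y * x ∈ K}

/-- A filter-regular sequence of linear forms in the associated graded ring:
each `zᵢ` is a degree-one element, and the colon ideal `((z₁,…,zᵢ₋₁) : zᵢ)` is contained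
in the `G₊`-saturation of `(z₁,…,zᵢ₋₁)`. -/
def IsFilterRegular (I : Ideal R) (zs : List (assocGraded I)) : Prop :=
  (∀ z ∈ zs, z ∈ gradedPiece I 1) ∧
  ∀ i (h : i < zs.length), ∀ x : assocGraded I,
    x * zs[i] ∈ Ideal.span {w | w ∈ zs.take i} →
    x ∈ satIrrelevant I (Ideal.span {w | w ∈ zs.take i})

/-- The top degree `a(H⁰_{G₊}(G/K))`: the supremum of the degrees of homogeneous elements
of the saturation of `K` that do not lie in `K`. -/
def a0 (I : Ideal R) (K : Ideal (assocGraded I)) : ℕ∞ :=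
  sSup {n : ℕ∞ | ∃ m : ℕ, (m : ℕ∞) = n ∧ ∃ x ∈ gradedPiece I m,
    x ∈ satIrrelevant I K ∧ x ∉ K}

/-- The Castelnuovo–Mumford regularity of the associated graded ring `G = gr_I(R)`,
via Trung's characterization: for a filter-regular sequence `z₁,…,z_s` of linear forms
generating a reduction of `G₊`, `reg G = max_{0 ≤ i ≤ s} a(H⁰_{G₊}(G/(z₁,…,zᵢ)))`. -/
def assocGradedReg (I : Ideal R) : ℕ∞ :=
  sInf {m : ℕ∞ | ∃ zs : List (assocGraded I), IsFilterRegular I zs ∧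
    (∃ n : ℕ, (irrelevantIdeal I) ^ (n + 1) =
      Ideal.span {w | w ∈ zs} * (irrelevantIdeal I) ^ n) ∧
    ∀ i ≤ zs.length, a0 I (Ideal.span {w | w ∈ zs.take i}) ≤ m}

/-- The initial form `a* ∈ [G]₁ = I/I²` of an element `a ∈ I` (junk value `0` if `a ∉ I`). -/
def initialForm (I : Ideal R) (a : R) : assocGraded I :=
  if h : a ∈ I then
    Ideal.Quotient.mk (constIdeal I)
      ⟨Polynomial.monomial 1 a, reesAlgebra.monomial_mem.mpr (by rwa [pow_one])⟩
  else 0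

/-- The degree-zero initial form `x* ∈ [G]₀ = R/I` of `x ∈ R`. -/
def initialForm0 (I : Ideal R) (x : R) : assocGraded I :=
  algebraMap R (assocGraded I) x

section Aux

variable {R : Type*} [CommRing R]

open Polynomial

lemma coeff_mem_of_mem_reesAlgebra {I : Ideal R} (f : reesAlgebra I) (n : ℕ) :
    (f : R[X]).coeff n ∈ I ^ n :=
  (mem_reesAlgebra_iff I (f : R[X])).mp f.2 n

lemma monomial_mem_constIdeal {I : Ideal R} {n : ℕ} {c : R} (hc : c ∈ I ^ (n + 1))
    (h : (monomial n c : R[X]) ∈ reesAlgebra I) :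
    (⟨monomial n c, h⟩ : reesAlgebra I) ∈ constIdeal I := by
  have key : ∃ g : reesAlgebra I, (g : R[X]) = monomial n c ∧ g ∈ constIdeal I := by
    rw [pow_succ'] at hc
    refine Submodule.mul_induction_on hc ?_ ?_
    · intro i hi m hm
      refine ⟨algebraMap R (reesAlgebra I) i *
        ⟨monomial n m, reesAlgebra.monomial_mem.mpr hm⟩, ?_, ?_⟩
      · push_cast
        rw [Polynomial.algebraMap_eq, C_mul_monomial]
      · exact Ideal.mul_mem_right _ _ (Ideal.subset_span ⟨i, hi, rfl⟩)
    · rintro y z ⟨g1, hg1, hg1'⟩ ⟨g2, hg2, hg2'⟩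
      refine ⟨g1 + g2, ?_, Ideal.add_mem _ hg1' hg2'⟩
      push_cast
      rw [hg1, hg2, ← map_add]
  obtain ⟨g, hgc, hg⟩ := key
  have : (⟨monomial n c, h⟩ : reesAlgebra I) = g := Subtype.ext hgc.symm
  rw [this]; exact hg

lemma mem_constIdeal_iff {I : Ideal R} (f : reesAlgebra I) :
    f ∈ constIdeal I ↔ ∀ n, (f : R[X]).coeff n ∈ I ^ (n + 1) := by
  constructor
  · intro hf
    refine Submodule.span_induction ?_ ?_ ?_ ?_ hf
    · rintro g ⟨i, hi, rfl⟩ n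
      rw [Subalgebra.coe_algebraMap, Polynomial.algebraMap_eq, coeff_C]
      split
      · next h0 => rw [h0, pow_one]; exact hi
      · exact zero_mem _
    · intro n; simp
    · intro y z _ _ hy hz n
      push_cast
      rw [coeff_add]
      exact add_mem (hy n) (hz n)
    · intro r g _ ih n
      rw [smul_eq_mul]
      push_cast
      rw [coeff_mul]
      refine Submodule.sum_mem _ ?_
      rintro ⟨i, j⟩ hij
      have hij' : i + j = n := Finset.HasAntidiagonal.mem_antidiagonal.mp hij
      have h1 : (r : R[X]).coeff i * (g : R[X]).coeff j ∈ I ^ (i + (j + 1)) := by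
        rw [pow_add]
        exact Ideal.mul_mem_mul (coeff_mem_of_mem_reesAlgebra r i) (ih j)
      have : i + (j + 1) = n + 1 := by omega
      rwa [this] at h1
  · intro h
    have hf : f = ∑ n ∈ (f : R[X]).support,
        (⟨monomial n ((f : R[X]).coeff n),
          reesAlgebra.monomial_mem.mpr (coeff_mem_of_mem_reesAlgebra f n)⟩ : reesAlgebra I) := by
      apply Subtype.ext
      push_cast
      exact (f : R[X]).as_sum_support
    rw [hf]
    exact Submodule.sum_mem _ fun n _ => monomial_mem_constIdeal (h n) _

end Aux

/-- The key claim in the proof of Theorem 1.1(2): if `(a)` is a principal reduction of `I`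
with `Iʳ⁺¹ = aIʳ` and `a` regular on `R`, and `x` is regular on `R` and on `R/Iʲ` for
`1 ≤ j ≤ r - 1`, with `(0 : a) ∩ Iⁿ = 0` for `n ≥ r`, then `x* + a*` is a nonzerodivisor
on `G = gr_I(R)`, where `x*` is the degree-`0` and `a*` the degree-`1` initial form. -/
theorem initialForm_add_isRegular
    {R : Type*} [CommRing R] [IsLocalRing R]
    (hNoeth : IsNoetherianRing R)
    (I : Ideal R) (a x : R) (r : ℕ) (ha : a ∈ I)
    (hred : I ^ (r + 1) = Ideal.span {a} * I ^ r)
    (hrmin : ∀ n, I ^ (n + 1) = Ideal.span {a} * I ^ n → r ≤ n)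
    (haR : ∀ y : R, a * y = 0 → y = 0)
    (hxR : ∀ y : R, x * y = 0 → y = 0)
    (hxQ : ∀ j, 1 ≤ j → j ≤ r - 1 → ∀ y : R ⧸ I ^ j, x • y = 0 → y = 0)
    (h0a : ∀ n, r ≤ n → ∀ y ∈ Submodule.colon (⊥ : Ideal R) (Ideal.span {a}) ⊓ I ^ n,
      y = 0) :
    ∀ gg : assocGraded I, (initialForm0 I x + initialForm I a) * gg = 0 → gg = 0 := by
  intro gg hgg
  obtain ⟨f, rfl⟩ := Ideal.Quotient.mk_surjective gg
  have hmon : (monomial 1 a : R[X]) ∈ reesAlgebra I :=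
    reesAlgebra.monomial_mem.mpr (by rwa [pow_one])
  set g : reesAlgebra I := algebraMap R (reesAlgebra I) x + ⟨monomial 1 a, hmon⟩ with hg
  have hsum : initialForm0 I x + initialForm I a = Ideal.Quotient.mk (constIdeal I) g := by
    rw [initialForm, dif_pos ha, initialForm0, hg, map_add]
    rfl
  rw [hsum, ← map_mul, Ideal.Quotient.eq_zero_iff_mem] at hgg
  have hcoef := (mem_constIdeal_iff (g * f)).mp hgg
  set c : ℕ → R := fun n => (f : R[X]).coeff n with hcdef
  have hc : ∀ n, c n ∈ I ^ n := fun n => coeff_mem_of_mem_reesAlgebra f n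
  have hcoe : ((g * f : reesAlgebra I) : R[X]) = (C x + monomial 1 a) * (f : R[X]) := by
    rw [hg]
    push_cast
    rw [Polynomial.algebraMap_eq]
  rw [hcoe] at hcoef
  have hcond0 : x * c 0 ∈ I ^ 1 := by
    have h0 := hcoef 0
    rwa [add_mul, coeff_add, mul_coeff_zero, mul_coeff_zero, coeff_C, coeff_monomial,
      if_pos rfl, if_neg one_ne_zero, zero_mul, add_zero] at h0
  have hcondS : ∀ n, x * c (n + 1) + a * c n ∈ I ^ (n + 2) := by
    intro n
    have h1 := hcoef (n + 1)
    rwa [add_mul, coeff_add, coeff_C_mul, coeff_monomial_mul (f : R[X]) 1 n a] at h1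
  have powSucc : ∀ m, r ≤ m → I ^ (m + 1) = Ideal.span {a} * I ^ m := by
    intro m hm
    induction m, hm using Nat.le_induction with
    | base => exact hred
    | succ m hm ih =>
      calc I ^ (m + 1 + 1) = I ^ (m + 1) * I := pow_succ I (m + 1)
        _ = (Ideal.span {a} * I ^ m) * I := by rw [ih]
        _ = Ideal.span {a} * I ^ (m + 1) := by rw [mul_assoc, ← pow_succ]
  set N := (f : R[X]).natDegree with hN
  have hdown : ∀ j n, N + 1 ≤ n + j → r ≤ n + 1 → c n ∈ I ^ (n + 1) := by
    intro j
    induction j with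
    | zero =>
      intro n hn _
      have : c n = 0 := coeff_eq_zero_of_natDegree_lt (by omega)
      rw [this]; exact zero_mem _
    | succ j ih =>
      intro n hn hr
      have hnext : c (n + 1) ∈ I ^ (n + 2) := ih (n + 1) (by omega) (by omega)
      have h1 : a * c n ∈ I ^ (n + 2) := by
        have h2 : x * c (n + 1) ∈ I ^ (n + 2) := Ideal.mul_mem_left _ _ hnext
        have h3 := hcondS n
        have : a * c n = (x * c (n + 1) + a * c n) - x * c (n + 1) := by ring
        rw [this]; exact Submodule.sub_mem _ h3 h2
      rw [show n + 2 = (n + 1) + 1 from rfl, powSucc (n + 1) hr] at h1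
      obtain ⟨u, hu, hau⟩ := Ideal.mem_span_singleton_mul.mp h1
      have : a * (c n - u) = 0 := by rw [mul_sub, hau, sub_self]
      have := haR _ this
      have hcnu : c n = u := by linear_combination this
      rw [hcnu]; exact hu
  have hge : ∀ n, r ≤ n + 1 → c n ∈ I ^ (n + 1) := fun n h => hdown (N + 1) n (by omega) h
  have hup : ∀ n, c n ∈ I ^ (n + 1) := by
    intro n
    induction n using Nat.strong_induction_on with
    | _ n ih =>
      by_cases hr' : r ≤ n + 1
      · exact hge n hr'
      · have hx : x * c n ∈ I ^ (n + 1) := by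
          match n with
          | 0 => exact hcond0
          | m + 1 =>
            have hcm : c m ∈ I ^ (m + 1) := ih m (by omega)
            have ham : a * c m ∈ I ^ (m + 2) := by
              have := Ideal.mul_mem_mul ha hcm
              rwa [← pow_succ'] at this
            have h3 := hcondS m
            have : x * c (m + 1) = (x * c (m + 1) + a * c m) - a * c m := by ring
            rw [this]; exact Submodule.sub_mem _ h3 ham
        have hmk : x • (Ideal.Quotient.mk (I ^ (n + 1)) (c n)) = 0 := by
          rw [show x • (Ideal.Quotient.mk (I ^ (n + 1)) (c n)) =
            Ideal.Quotient.mk (I ^ (n + 1)) (x * c n) from rfl,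
            Ideal.Quotient.eq_zero_iff_mem]
          exact hx
        have := hxQ (n + 1) (by omega) (by omega) _ hmk
        exact Ideal.Quotient.eq_zero_iff_mem.mp this
  rw [Ideal.Quotient.eq_zero_iff_mem]
  exact (mem_constIdeal_iff f).mpr hup
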